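/- For every i in Z/3, every word w in the set B_{i+1} satisfies (a_i b_i) w ~ w (a_i b_i) in SK, and every word w in the set B_{i-1} satisfies (a_i d_i) w ~ w (a_i d_i) in SK. -/

import Mathlib

/-- The 15-letter alphabet A = {a_i, b_i, c_i, d_i, x_i : i ∈ ℤ/3}. -/
inductive Letter : Type
  | a : ZMod 3 → Letter
  | b : ZMod 3 → Letter
  | c : ZMod 3 → Letter
  | d : ZMod 3 → Letter
  | x : ZMod 3 → Letter
  deriving DecidableEq

/-- Words: the free monoid on the alphabet A. -/
abbrev Word := FreeMonoid Letter

def a (i : ZMod 3) : Word := FreeMonoid.of (Letter.a i)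
def b (i : ZMod 3) : Word := FreeMonoid.of (Letter.b i)
def c (i : ZMod 3) : Word := FreeMonoid.of (Letter.c i)
def d (i : ZMod 3) : Word := FreeMonoid.of (Letter.d i)
def x (i : ZMod 3) : Word := FreeMonoid.of (Letter.x i)

/-- t_i = b_{i+1} d_{i-1} d_{i+1} b_{i-1}. -/
def t (i : ZMod 3) : Word := b (i+1) * d (i-1) * d (i+1) * b (i-1)

/-- t'_i = d_{i-1} b_{i+1} b_{i-1} d_{i+1}. -/
def t' (i : ZMod 3) : Word := d (i-1) * b (i+1) * b (i-1) * d (i+1)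

/-- The defining relations (1)-(10) of the semigroup SK. -/
inductive SKRel : Word → Word → Prop
  | r1a (i : ZMod 3) : SKRel (a i) (a (i+1) * d (i-1))
  | r1b (i : ZMod 3) : SKRel (b i) (a (i-1) * c (i+1))
  | r1c (i : ZMod 3) : SKRel (c i) (b (i-1) * c (i+1))
  | r1d (i : ZMod 3) : SKRel (d i) (a (i+1) * c (i-1))
  | r2 (i : ZMod 3) : SKRel (x i) (d (i+1) * x (i-1) * b (i+1))
  | r3 : SKRel (d 0 * d 1 * d 2) 1
  | r4bd (i : ZMod 3) : SKRel (b i * d i) 1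
  | r4db (i : ZMod 3) : SKRel (d i * b i) 1
  | r5d (i : ZMod 3) : SKRel (d i * x i * d i) (a i * (d i * x i * d i) * c i)
  | r5b (i : ZMod 3) : SKRel (b i * x i * b i) (a i * (b i * x i * b i) * c i)
  | r6 (i : ZMod 3) :
      SKRel (x i * (d (i+1) * d i * d (i-1))) ((d (i+1) * d i * d (i-1)) * x i)
  | r7 (i : ZMod 3) (w : Word)
      (hw : w ∈ ({c (i+1), x (i+1), b i * d (i+1) * d i} : Set Word)) :
      SKRel ((d i * c i) * w) (w * (d i * c i))
  | r8 (i : ZMod 3) (w : Word)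
      (hw : w ∈ ({a (i+1), b (i+1), c (i+1), x (i+1), b i * d (i+1) * d i} : Set Word)) :
      SKRel ((a i * b i) * w) (w * (a i * b i))
  | r9 (i : ZMod 3) (w : Word)
      (hw : w ∈ ({a i, b i, c i, x i, b (i-1) * d i * d (i-1)} : Set Word)) :
      SKRel (t i * w) (w * t i)
  | r10 (i : ZMod 3) (w : Word)
      (hw : w ∈ ({a (i+1), b (i+1), c (i+1), x (i+1), b i * d (i+1) * d i} : Set Word)) :
      SKRel ((d i * x i * b i) * w) (w * (d i * x i * b i))

/-- The congruence generated by relations (1)-(10); `skCon u v` means u ~ v,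
i.e. u and v have equal images in the presented monoid SK. -/
def skCon : Con Word := conGen SKRel

/-- B_j = {a_j, b_j, c_j, d_j, b_{j-1} b_j d_{j-1}, b_{j-1} d_j d_{j-1}}. -/
def Bset (j : ZMod 3) : Set Word :=
  {a j, b j, c j, d j, b (j-1) * b j * d (j-1), b (j-1) * d j * d (j-1)}

namespace SKWork

abbrev SK := skCon.Quotient

def φ : Word →* SK := skCon.mk'

lemma qrel {u v : Word} (h : SKRel u v) : φ u = φ v :=
  skCon.eq.mpr (ConGen.Rel.of u v h)

lemma toSkCon {u v : Word} (h : φ u = φ v) : skCon u v := skCon.eq.mp h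

lemma bd (i : ZMod 3) : φ (b i) * φ (d i) = 1 := by
  simpa [map_mul, map_one] using qrel (SKRel.r4bd i)

lemma db (i : ZMod 3) : φ (d i) * φ (b i) = 1 := by
  simpa [map_mul, map_one] using qrel (SKRel.r4db i)

/-- d_i as a unit of SK with inverse b_i. -/
def U (i : ZMod 3) : SKˣ := ⟨φ (d i), φ (b i), db i, bd i⟩

lemma e3 : φ (d 0) * φ (d 1) * φ (d 2) = 1 := by
  simpa [map_mul, map_one] using qrel SKRel.r3

lemma rot {G : Type*} [Group G] {x y z : G} (h : x * y * z = 1) : z * x * y = 1 := by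
  have hz : z = (x * y)⁻¹ := eq_inv_of_mul_eq_one_right h
  rw [mul_assoc, hz, inv_mul_cancel]

lemma hU3 : U 0 * U 1 * U 2 = 1 := Units.ext e3

lemma cyc (i : ZMod 3) : U (i - 1) * U i * U (i + 1) = 1 := by
  fin_cases i
  · exact rot hU3
  · exact hU3
  · exact rot (rot hU3)

lemma bEq (i : ZMod 3) : φ (b (i + 1)) = φ (d (i - 1)) * φ (d i) := by
  have h1 : U (i + 1) = (U (i - 1) * U i)⁻¹ := eq_inv_of_mul_eq_one_right (cyc i)
  have h2 : (U (i + 1))⁻¹ = U (i - 1) * U i := by rw [h1, inv_inv]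
  calc φ (b (i + 1)) = (((U (i + 1))⁻¹ : SKˣ) : SK) := rfl
    _ = ((U (i - 1) * U i : SKˣ) : SK) := by rw [h2]
    _ = φ (d (i - 1)) * φ (d i) := rfl

lemma adEq (i : ZMod 3) : φ (a i) * φ (d i) = φ (a (i + 1)) * φ (b (i + 1)) := by
  have h1 : φ (a i) = φ (a (i + 1)) * φ (d (i - 1)) := by
    simpa [map_mul] using qrel (SKRel.r1a i)
  rw [h1, mul_assoc, ← bEq i]

lemma cbd (i : ZMod 3) (z : SK) : φ (b i) * (φ (d i) * z) = z := by
  rw [← mul_assoc, bd, one_mul]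

lemma cdb (i : ZMod 3) (z : SK) : φ (d i) * (φ (b i) * z) = z := by
  rw [← mul_assoc, db, one_mul]

lemma Wval (i : ZMod 3) :
    (φ (b i) * φ (d (i + 1)) * φ (d i)) * (φ (b i) * φ (b (i + 1)) * φ (d i)) = 1 := by
  simp only [mul_assoc, cdb, cbd, bd, db]

lemma Wval' (i : ZMod 3) :
    (φ (b i) * φ (b (i + 1)) * φ (d i)) * (φ (b i) * φ (d (i + 1)) * φ (d i)) = 1 := by
  simp only [mul_assoc, cdb, cbd, bd, db]

/-- b_i d_{i+1} d_i as a unit of SK with inverse b_i b_{i+1} d_i. -/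
def W (i : ZMod 3) : SKˣ :=
  ⟨φ (b i) * φ (d (i + 1)) * φ (d i), φ (b i) * φ (b (i + 1)) * φ (d i), Wval i, Wval' i⟩

lemma key (j : ZMod 3) :
    ∀ w ∈ Bset (j + 1), (φ (a j) * φ (b j)) * φ w = φ w * (φ (a j) * φ (b j)) := by
  have c8 : ∀ w ∈ ({a (j+1), b (j+1), c (j+1), x (j+1), b j * d (j+1) * d j} : Set Word),
      (φ (a j) * φ (b j)) * φ w = φ w * (φ (a j) * φ (b j)) := by
    intro w hw
    simpa [map_mul] using qrel (SKRel.r8 j w hw)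
  intro w hw
  simp only [Bset, add_sub_cancel_right, Set.mem_insert_iff, Set.mem_singleton_iff] at hw
  rcases hw with rfl | rfl | rfl | rfl | rfl | rfl
  · exact c8 _ (Or.inl rfl)
  · exact c8 _ (Or.inr (Or.inl rfl))
  · exact c8 _ (Or.inr (Or.inr (Or.inl rfl)))
  · have hc : Commute (φ (a j) * φ (b j)) (((U (j + 1))⁻¹ : SKˣ) : SK) :=
      c8 _ (Or.inr (Or.inl rfl))
    have h2 := hc.units_inv_right
    rw [inv_inv] at h2
    exact h2
  · have hc : Commute (φ (a j) * φ (b j)) ((W j : SKˣ) : SK) := by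
      have := c8 _ (Or.inr (Or.inr (Or.inr (Or.inr rfl))))
      simpa [map_mul, W, Commute, SemiconjBy] using this
    have h2 := hc.units_inv_right
    simpa [map_mul, W, Commute, SemiconjBy] using h2
  · have := c8 _ (Or.inr (Or.inr (Or.inr (Or.inr rfl))))
    simpa [map_mul] using this

end SKWork


/-- (35)-(36): (a_i b_i) w ~ w (a_i b_i) for w ∈ B_{i+1} and
(a_i d_i) w ~ w (a_i d_i) for w ∈ B_{i-1}. -/
theorem equiv_35_36 : ∀ i : ZMod 3,
    (∀ w ∈ Bset (i+1), skCon (a i * b i * w) (w * (a i * b i))) ∧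
    (∀ w ∈ Bset (i-1), skCon (a i * d i * w) (w * (a i * d i))) := by
  intro i
  constructor
  · intro w hw
    refine SKWork.toSkCon ?_
    simp only [map_mul]
    exact SKWork.key i w hw
  · intro w hw
    have e : i - 1 = i + 1 + 1 := by
      rw [sub_eq_add_neg, add_assoc]
      congr 1
    rw [e] at hw
    refine SKWork.toSkCon ?_
    simp only [map_mul]
    rw [SKWork.adEq i]
    exact SKWork.key (i + 1) w hw
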